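/- Conversely, every behaviour of the simple protocol semantics arises as the slot-i projection of some slot-replicated behaviour in which all slots other than i stutter; hence for all I and i ∈ I the slot-i projections of slot-replicated behaviours coincide exactly with the simple-semantics behaviours. -/

import Mathlib

namespace PaxosNet

/-- Messages of a protocol: a source node, a destination node, an `active`
flag (set on sending, cleared on receipt) and a content. -/
structure Msg (C : Type*) where
  src : ℕ
  dst : ℕ
  active : Bool
  content : C

/-- An abstract distributed protocol `⟨Δ, M, S_int, S_rcv, S_snd⟩` with a set
of initial local states, an internal step relation, a receive relation and a
send relation. -/
structure Protocol (Δ C : Type*) where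
  init : Set Δ
  sint : Δ → Δ → Prop
  srcv : Δ → Msg C → Δ → Prop
  ssnd : Δ → Δ → Set (Msg C) → Prop

variable {Δ C I : Type*}

def deact (m : Msg C) : Msg C := { m with active := false }

/-- A configuration: a global state assigning local states to nodes, together
with a "message soup". -/
abbrev Conf (Δ C : Type*) := (ℕ → Δ) × Set (Msg C)

/-- The simple protocol-aware network semantics: internal steps, send steps
(adding the emitted messages to the soup) and receive steps (consuming an
active message, deactivating it, and updating the destination node). -/
inductive SimpleStep (p : Protocol Δ C) : Conf Δ C → Conf Δ C → Prop
  | int (σ : ℕ → Δ) (M : Set (Msg C)) (n : ℕ) (δ' : Δ) :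
      p.sint (σ n) δ' →
      SimpleStep p (σ, M) (Function.update σ n δ', M)
  | send (σ : ℕ → Δ) (M : Set (Msg C)) (n : ℕ) (δ' : Δ) (ms : Set (Msg C)) :
      p.ssnd (σ n) δ' ms →
      SimpleStep p (σ, M) (Function.update σ n δ', M ∪ ms)
  | recv (σ : ℕ → Δ) (M : Set (Msg C)) (m : Msg C) (δ' : Δ) :
      m ∈ M → m.active = true →
      p.srcv (σ m.dst) m δ' →
      SimpleStep p (σ, M) (Function.update σ m.dst δ', (M \ {m}) ∪ {deact m})

/-- Behaviours of a step relation: the prefix-closed set of finite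
configuration traces that start in an initial configuration and are closed
under steps. -/
def Beh {α : Type*} (step : α → α → Prop) (initC : α → Prop) : Set (List α) :=
  { t | List.Chain' step t ∧ ∀ c ∈ t.head?, initC c }

def SimpleInit (p : Protocol Δ C) : Conf Δ C → Prop :=
  fun c => ∀ n, c.1 n ∈ p.init

/-! ### Slot-replicating semantics -/

/-- Slotted messages: messages enhanced with a `slot` field from `I`. -/
abbrev SMsg (C I : Type*) := Msg (I × C)

/-- Slot-replicated configurations: each node holds an `I`-indexed array of
local states. -/
abbrev SConf (Δ C I : Type*) := (ℕ → I → Δ) × Set (SMsg C I)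

def slotOf (m : SMsg C I) : I := m.content.1

/-- Erase the slot field of a slotted message. -/
def core (m : SMsg C I) : Msg C := ⟨m.src, m.dst, m.active, m.content.2⟩

/-- Tag a message with a slot. -/
def withSlot (i : I) (m : Msg C) : SMsg C I := ⟨m.src, m.dst, m.active, (i, m.content)⟩

variable [DecidableEq I]

def updSlot (σ : ℕ → I → Δ) (n : ℕ) (i : I) (δ' : Δ) : ℕ → I → Δ :=
  Function.update σ n (Function.update (σ n) i δ')

/-- The slot-replicating network semantics: each rule acts on the component of
a single slot, and messages are dispatched according to their slot field. -/
inductive SRStep (p : Protocol Δ C) : SConf Δ C I → SConf Δ C I → Prop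
  | int (σ : ℕ → I → Δ) (M : Set (SMsg C I)) (n : ℕ) (i : I) (δ' : Δ) :
      p.sint (σ n i) δ' →
      SRStep p (σ, M) (updSlot σ n i δ', M)
  | send (σ : ℕ → I → Δ) (M : Set (SMsg C I)) (n : ℕ) (i : I) (δ' : Δ)
      (ms : Set (Msg C)) :
      p.ssnd (σ n i) δ' ms →
      SRStep p (σ, M) (updSlot σ n i δ', M ∪ (withSlot i '' ms))
  | recv (σ : ℕ → I → Δ) (M : Set (SMsg C I)) (m : SMsg C I) (δ' : Δ) :
      m ∈ M → m.active = true →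
      p.srcv (σ m.dst (slotOf m)) (core m) δ' →
      SRStep p (σ, M)
        (updSlot σ m.dst (slotOf m) δ', (M \ {m}) ∪ {deact m})

def SRInit (p : Protocol Δ C) : SConf Δ C I → Prop :=
  fun c => ∀ (n : ℕ) (i : I), c.1 n i ∈ p.init

/-- Projection of a slot-replicated configuration onto slot `i`: restrict each
node's state to the `i`-th component and the soup to the messages with slot
field `i` (with their slot field erased). -/
def projConf (i : I) (c : SConf Δ C I) : Conf Δ C :=
  (fun n => c.1 n i, core '' { m ∈ c.2 | slotOf m = i })

set_option linter.unusedSectionVars false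

section Aux
variable {Δ C I : Type*} [DecidableEq I]

@[simp] lemma core_withSlot (i : I) (m : Msg C) : core (withSlot i m) = m := rfl

@[simp] lemma slotOf_withSlot (i : I) (m : Msg C) : slotOf (withSlot i m) = i := rfl

lemma withSlot_injective (i : I) : Function.Injective (withSlot (C := C) i) := by
  rintro ⟨a,b,c,d⟩ ⟨a',b',c',d'⟩ h
  simpa [withSlot, Msg.mk.injEq, Prod.ext_iff] using h

@[simp] lemma deact_withSlot (i : I) (m : Msg C) :
    deact (withSlot i m) = withSlot i (deact m) := rfl

lemma core_inj_slot {m m' : SMsg C I} (h1 : slotOf m = slotOf m')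
    (h2 : core m = core m') : m = m' := by
  obtain ⟨a,b,c,s,d⟩ := m; obtain ⟨a',b',c',s',d'⟩ := m'
  simp only [slotOf, core, Msg.mk.injEq] at h1 h2
  simp [Msg.mk.injEq, Prod.ext_iff, h1, h2.1, h2.2.1, h2.2.2]

/-- The soup projection. -/
def pf (i : I) (M : Set (SMsg C I)) : Set (Msg C) :=
  core '' { m ∈ M | slotOf m = i }

lemma projConf_def (i : I) (c : SConf Δ C I) :
    projConf i c = (fun n => c.1 n i, pf i c.2) := rfl

lemma pf_union (i : I) (A B : Set (SMsg C I)) :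
    pf i (A ∪ B) = pf i A ∪ pf i B := by
  simp [pf, Set.sep_union, Set.image_union]

lemma pf_withSlot_image (i j : I) (ms : Set (Msg C)) :
    pf i (withSlot j '' ms) = if j = i then ms else ∅ := by
  ext x
  split <;> rename_i h
  · subst h
    simp only [pf, Set.mem_image, Set.mem_setOf_eq]
    constructor
    · rintro ⟨y, ⟨⟨z, hz, rfl⟩, _⟩, rfl⟩; simpa using hz
    · intro hx; exact ⟨withSlot j x, ⟨⟨x, hx, rfl⟩, rfl⟩, rfl⟩
  · simp only [pf, Set.mem_image, Set.mem_setOf_eq, Set.mem_empty_iff_false, iff_false]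
    rintro ⟨y, ⟨⟨z, hz, rfl⟩, hsl⟩, rfl⟩
    exact h (by simpa using hsl)

lemma pf_singleton (i : I) (m : SMsg C I) :
    pf i {m} = if slotOf m = i then {core m} else ∅ := by
  ext x
  split <;> rename_i h
  · simp only [pf, Set.mem_image, Set.mem_setOf_eq, Set.mem_singleton_iff]
    constructor
    · rintro ⟨y, ⟨rfl, _⟩, rfl⟩; rfl
    · rintro rfl; exact ⟨m, ⟨rfl, h⟩, rfl⟩
  · simp only [pf, Set.mem_image, Set.mem_setOf_eq, Set.mem_singleton_iff,
      Set.mem_empty_iff_false, iff_false]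
    rintro ⟨y, ⟨rfl, hy⟩, rfl⟩; exact h hy

lemma pf_diff_mem (i : I) (M : Set (SMsg C I)) (m : SMsg C I) (hm : slotOf m = i) :
    pf i (M \ {m}) = pf i M \ {core m} := by
  ext x
  simp only [pf, Set.mem_image, Set.mem_setOf_eq, Set.mem_diff, Set.mem_singleton_iff]
  constructor
  · rintro ⟨y, ⟨⟨hy, hy2⟩, hsl⟩, rfl⟩
    exact ⟨⟨y, ⟨hy, hsl⟩, rfl⟩, fun hc => hy2 (core_inj_slot (by rw [hsl, hm]) hc)⟩
  · rintro ⟨⟨y, ⟨hy, hsl⟩, rfl⟩, hne⟩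
    exact ⟨y, ⟨⟨hy, fun hc => hne (by rw [hc])⟩, hsl⟩, rfl⟩

lemma pf_diff_notmem (i : I) (M : Set (SMsg C I)) (m : SMsg C I) (hm : slotOf m ≠ i) :
    pf i (M \ {m}) = pf i M := by
  ext x
  simp only [pf, Set.mem_image, Set.mem_setOf_eq, Set.mem_diff, Set.mem_singleton_iff]
  constructor
  · rintro ⟨y, ⟨⟨hy, _⟩, hsl⟩, rfl⟩; exact ⟨y, ⟨hy, hsl⟩, rfl⟩
  · rintro ⟨y, ⟨hy, hsl⟩, rfl⟩
    exact ⟨y, ⟨⟨hy, fun hc => hm (hc ▸ hsl)⟩, hsl⟩, rfl⟩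

lemma simpleStep_refl (p : Protocol Δ C) (hid : ∀ δ, p.sint δ δ) (c : Conf Δ C) :
    SimpleStep p c c := by
  obtain ⟨σ, M⟩ := c
  have := SimpleStep.int (p := p) σ M 0 (σ 0) (hid _)
  simpa using this

lemma proj_step (p : Protocol Δ C) (hid : ∀ δ, p.sint δ δ) (i : I)
    {c c' : SConf Δ C I} (h : SRStep p c c') :
    SimpleStep p (projConf i c) (projConf i c') := by
  cases h with
  | int σ M n j δ' h =>
    by_cases hj : j = i
    · subst hj
      have : projConf j (updSlot σ n j δ', M)
          = (Function.update (fun n' => σ n' j) n δ', pf j M) := by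
        rw [projConf_def]
        refine congrArg (·, pf j M) ?_
        funext n'
        simp only [updSlot, Function.update_apply]
        split_ifs <;> simp_all
      rw [this, projConf_def]
      exact SimpleStep.int _ _ n δ' h
    · have : projConf i (updSlot σ n j δ', M) = projConf i (σ, M) := by
        rw [projConf_def, projConf_def]
        refine congrArg (·, pf i M) ?_
        funext n'
        simp only [updSlot, Function.update_apply]
        split_ifs <;> simp_all [Ne.symm hj]
      rw [this]
      exact simpleStep_refl p hid _
  | send σ M n j δ' ms h =>
    by_cases hj : j = i
    · subst hj
      have : projConf j (updSlot σ n j δ', M ∪ withSlot j '' ms)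
          = (Function.update (fun n' => σ n' j) n δ', pf j M ∪ ms) := by
        rw [projConf_def]
        refine congrArg₂ (·, ·) ?_ ?_
        · funext n'
          simp only [updSlot, Function.update_apply]
          split_ifs <;> simp_all
        · rw [pf_union, pf_withSlot_image, if_pos rfl]
      rw [this, projConf_def]
      exact SimpleStep.send _ _ n δ' ms h
    · have : projConf i (updSlot σ n j δ', M ∪ withSlot j '' ms) = projConf i (σ, M) := by
        rw [projConf_def, projConf_def]
        refine congrArg₂ (·, ·) ?_ ?_
        · funext n'
          simp only [updSlot, Function.update_apply]
          split_ifs <;> simp_all [Ne.symm hj]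
        · rw [pf_union, pf_withSlot_image, if_neg hj, Set.union_empty]
      rw [this]
      exact simpleStep_refl p hid _
  | recv σ M m δ' hm hact hr =>
    by_cases hj : slotOf m = i
    · have hsoup : pf i ((M \ {m}) ∪ {deact m})
          = (pf i M \ {core m}) ∪ {deact (core m)} := by
        rw [pf_union, pf_diff_mem i M m hj, pf_singleton]
        simp only [slotOf, deact] at *
        simp [hj, core, deact]
      have hst : projConf i (updSlot σ m.dst (slotOf m) δ', (M \ {m}) ∪ {deact m})
          = (Function.update (fun n' => σ n' i) (core m).dst δ',
             (pf i M \ {core m}) ∪ {deact (core m)}) := by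
        rw [projConf_def, hsoup]
        refine congrArg (·, _) ?_
        funext n'
        simp only [updSlot, Function.update_apply, core, hj]
        split_ifs <;> simp_all
      rw [hst, projConf_def]
      refine SimpleStep.recv _ _ (core m) δ' ?_ hact ?_
      · exact ⟨m, ⟨hm, hj⟩, rfl⟩
      · show p.srcv ((fun n => σ n i) (core m).dst) (core m) δ'
        simpa [core, hj] using hr
    · have : projConf i (updSlot σ m.dst (slotOf m) δ', (M \ {m}) ∪ {deact m})
          = projConf i (σ, M) := by
        rw [projConf_def, projConf_def]
        refine congrArg₂ (·, ·) ?_ ?_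
        · funext n'
          simp only [updSlot, Function.update_apply]
          split_ifs <;> simp_all [Ne.symm hj]
        · rw [pf_union, pf_diff_notmem i M m hj, pf_singleton]
          have : slotOf (deact m) = slotOf m := rfl
          simp [this, hj]
      rw [this]
      exact simpleStep_refl p hid _

/-- Lift of a simple configuration, stuttering other slots at `σ₀`. -/
def liftConf (i : I) (σ₀ : ℕ → Δ) (c : Conf Δ C) : SConf Δ C I :=
  (fun n j => if j = i then c.1 n else σ₀ n, withSlot i '' c.2)

lemma proj_liftConf (i : I) (σ₀ : ℕ → Δ) (c : Conf Δ C) :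
    projConf i (liftConf i σ₀ c) = c := by
  obtain ⟨σ, M⟩ := c
  rw [projConf_def]
  refine congrArg₂ (·, ·) (by funext n; simp [liftConf]) ?_
  rw [show (liftConf i σ₀ (σ, M)).2 = withSlot i '' M from rfl,
    pf_withSlot_image, if_pos rfl]

lemma lift_step (p : Protocol Δ C) (i : I) (σ₀ : ℕ → Δ)
    {c c' : Conf Δ C} (h : SimpleStep p c c') :
    SRStep p (liftConf i σ₀ c) (liftConf i σ₀ c') := by
  cases h with
  | int σ M n δ' h =>
    have key := SRStep.int (liftConf i σ₀ (σ, M)).1 (liftConf i σ₀ (σ, M)).2 n i δ'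
      (by simpa [liftConf] using h)
    have : (updSlot (liftConf i σ₀ (σ, M)).1 n i δ', (liftConf i σ₀ (σ, M)).2)
        = liftConf i σ₀ (Function.update σ n δ', M) := by
      refine congrArg (·, _) ?_
      funext n' j
      simp only [updSlot, liftConf, Function.update_apply]
      split_ifs <;> simp_all [Function.update_apply]
    rwa [this] at key
  | send σ M n δ' ms h =>
    have key := SRStep.send (liftConf i σ₀ (σ, M)).1 (liftConf i σ₀ (σ, M)).2 n i δ' ms
      (by simpa [liftConf] using h)
    have : (updSlot (liftConf i σ₀ (σ, M)).1 n i δ',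
        (liftConf i σ₀ (σ, M)).2 ∪ withSlot i '' ms)
        = liftConf i σ₀ (Function.update σ n δ', M ∪ ms) := by
      refine congrArg₂ (·, ·) ?_ ?_
      · funext n' j
        simp only [updSlot, liftConf, Function.update_apply]
        split_ifs <;> simp_all [Function.update_apply]
      · simp [liftConf, Set.image_union]
    rwa [this] at key
  | recv σ M m δ' hm hact hr =>
    have key := SRStep.recv (p := p) (liftConf i σ₀ (σ, M)).1 (liftConf i σ₀ (σ, M)).2
      (withSlot i m) δ' ⟨m, hm, rfl⟩ hact
      (by simpa [liftConf, core, withSlot, slotOf] using hr)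
    have : (updSlot (liftConf i σ₀ (σ, M)).1 (withSlot i m).dst (slotOf (withSlot i m)) δ',
        ((liftConf i σ₀ (σ, M)).2 \ {withSlot i m}) ∪ {deact (withSlot i m)})
        = liftConf i σ₀ (Function.update σ m.dst δ', (M \ {m}) ∪ {deact m}) := by
      refine congrArg₂ (·, ·) ?_ ?_
      · funext n' j
        simp only [updSlot, liftConf, withSlot, Function.update_apply, slotOf]
        split_ifs <;> simp_all [Function.update_apply]
      · show (withSlot i '' M \ {withSlot i m}) ∪ {deact (withSlot i m)}
            = withSlot i '' ((M \ {m}) ∪ {deact m})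
        rw [Set.image_union, Set.image_diff (withSlot_injective i), Set.image_singleton,
          Set.image_singleton, deact_withSlot]
    rwa [this] at key

end Aux

/-- **Slot-replicating simulation** (Lemma 2): for any index set `I` and any
slot `i ∈ I`, the slot-`i` projections of the behaviours of the
slot-replicating semantics coincide exactly with the behaviours of the simple
protocol semantics; in particular every simple behaviour arises as the
projection of some slot-replicated behaviour in which all other slots
stutter. -/
theorem slot_projection_eq_simple_behaviours
    (p : Protocol Δ C) (hid : ∀ δ, p.sint δ δ) (i : I) :
    (fun t => t.map (projConf i)) '' Beh (SRStep (I := I) p) (SRInit p)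
      = Beh (SimpleStep p) (SimpleInit p) := by
  ext t
  constructor
  · rintro ⟨s, ⟨hchain, hinit⟩, rfl⟩
    refine ⟨?_, ?_⟩
    · unfold List.Chain' at hchain ⊢; rw [List.isChain_map]
      exact hchain.imp (fun a b h => proj_step p hid i h)
    · intro c hc
      rw [List.head?_map, Option.mem_def, Option.map_eq_some_iff] at hc
      obtain ⟨c₀, hc₀, rfl⟩ := hc
      intro n
      exact hinit c₀ hc₀ n i
  · rintro ⟨hchain, hinit⟩
    match t with
    | [] => exact ⟨[], ⟨⟨List.isChain_nil, by simp⟩, rfl⟩⟩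
    | c₀ :: r =>
      refine ⟨(c₀ :: r).map (liftConf i c₀.1), ⟨?_, ?_⟩, ?_⟩
      · unfold List.Chain' at hchain ⊢; rw [List.isChain_map]
        exact hchain.imp (fun a b h => lift_step p i c₀.1 h)
      · intro c hc
        simp only [List.map_cons, List.head?_cons, Option.mem_def, Option.some.injEq] at hc
        subst hc
        intro n j
        have h0 := hinit c₀ rfl n
        by_cases hj : j = i <;> simp [liftConf, hj, h0]
      · show List.map (projConf i) (List.map (liftConf i c₀.1) (c₀ :: r)) = c₀ :: r
        rw [List.map_map,
          show projConf i ∘ liftConf i c₀.1 = (id : Conf Δ C → Conf Δ C)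
            from funext (proj_liftConf i c₀.1), List.map_id]

end PaxosNet
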